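/- arXiv:2004.04284 — 3 statements merged into one kernel-verified Lean document; each statement's English description precedes it below -/
import Mathlib

section
/- Let W ⊂ ℝⁿ be open and convex, and let h : W → ℝ be continuous and locally concave (every point of W has a neighborhood on which h is concave). Then h is concave on W. -/
/-- A continuous, locally concave function on an open convex set
W ⊂ ℝⁿ is concave on W. -/
theorem stmt5 (n : ℕ) (W : Set (EuclideanSpace ℝ (Fin n))) (hWo : IsOpen W)
    (hWc : Convex ℝ W) (h : EuclideanSpace ℝ (Fin n) → ℝ)
    (hcont : ContinuousOn h W)
    (hloc : ∀ p ∈ W, ∃ r > 0, Metric.ball p r ⊆ W ∧ ConcaveOn ℝ (Metric.ball p r) h) :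
    ConcaveOn ℝ W h := by
  refine ⟨hWc, ?_⟩
  intro x hx y hy a b ha hb hab
  set v : EuclideanSpace ℝ (Fin n) := y - x with hv
  set γ : ℝ → EuclideanSpace ℝ (Fin n) := fun t => x + t • v with hγ
  have hγW : ∀ t ∈ Set.Icc (0:ℝ) 1, γ t ∈ W := by
    intro t ht
    have hE : γ t = (1 - t) • x + t • y := by
      simp only [hγ, hv]; module
    rw [hE]
    exact hWc hx hy (by linarith [ht.2]) ht.1 (by ring)
  set g : ℝ → ℝ := fun t => h (γ t) with hg
  set d : ℝ → ℝ := fun t => g t - ((1 - t) * g 0 + t * g 1) with hd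
  have hγcont : Continuous γ := by
    apply continuous_const.add
    exact (continuous_id.smul continuous_const)
  have hdc : ContinuousOn d (Set.Icc 0 1) := by
    apply ContinuousOn.sub
    · exact hcont.comp hγcont.continuousOn hγW
    · fun_prop
  have hd0 : d 0 = 0 := by simp [hd]
  have hd1 : d 1 = 0 := by simp [hd]
  -- the key midpoint inequality from local concavity
  have key : ∀ t ∈ Set.Icc (0:ℝ) 1, 0 ≤ d t := by
    by_contra hcon
    push_neg at hcon
    obtain ⟨t0, ht0, ht0d⟩ := hcon
    obtain ⟨m, hm, hmmin⟩ :=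
      isCompact_Icc.exists_isMinOn (⟨0, by norm_num⟩ : (Set.Icc (0:ℝ) 1).Nonempty) hdc
    set c := d m with hc
    have hcneg : c < 0 := lt_of_le_of_lt (hmmin ht0) ht0d
    set A : Set ℝ := Set.Icc 0 1 ∩ d ⁻¹' {c} with hA
    have hAclosed : IsClosed A :=
      hdc.preimage_isClosed_of_isClosed isClosed_Icc isClosed_singleton
    have hAcomp : IsCompact A :=
      isCompact_Icc.of_isClosed_subset hAclosed Set.inter_subset_left
    have hAne : A.Nonempty := ⟨m, hm, rfl⟩
    obtain ⟨τ, hτA, hτlb⟩ := hAcomp.exists_isLeast hAne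
    obtain ⟨hτIcc, hτc⟩ := hτA
    have hdτ : d τ = c := hτc
    have hτ0 : 0 < τ := by
      rcases lt_or_eq_of_le hτIcc.1 with h' | h'
      · exact h'
      · exfalso; rw [← h'] at hdτ; rw [hd0] at hdτ; linarith
    have hm1 : m < 1 := by
      rcases lt_or_eq_of_le hm.2 with h' | h'
      · exact h'
      · exfalso; rw [h'] at hc; rw [hd1] at hc; linarith
    have hτ1 : τ < 1 := lt_of_le_of_lt (hτlb ⟨hm, rfl⟩) hm1
    -- local concavity at γ τ
    have hpW : γ τ ∈ W := hγW τ ⟨le_of_lt hτ0, le_of_lt hτ1⟩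
    obtain ⟨r, hr, hball, hconc⟩ := hloc (γ τ) hpW
    set δ : ℝ := min (min (r / (‖v‖ + 1)) τ) (1 - τ) with hδ
    have hv1 : (0:ℝ) < ‖v‖ + 1 := by positivity
    have hδpos : 0 < δ := by
      apply lt_min (lt_min _ hτ0) (by linarith)
      exact div_pos hr hv1
    have hδr : δ ≤ r / (‖v‖ + 1) := le_trans (min_le_left _ _) (min_le_left _ _)
    have hδτ : δ ≤ τ := le_trans (min_le_left _ _) (min_le_right _ _)
    have hδ1τ : δ ≤ 1 - τ := min_le_right _ _
    set t1 : ℝ := τ - δ / 2 with ht1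
    set t2 : ℝ := τ + δ / 2 with ht2
    have ht1I : t1 ∈ Set.Icc (0:ℝ) 1 := ⟨by simp only [ht1]; linarith, by simp only [ht1]; linarith⟩
    have ht2I : t2 ∈ Set.Icc (0:ℝ) 1 := ⟨by simp only [ht2]; linarith, by simp only [ht2]; linarith⟩
    have hdist : ∀ s : ℝ, |s - τ| * (‖v‖ + 1) < r → γ s ∈ Metric.ball (γ τ) r := by
      intro s hs
      rw [Metric.mem_ball, dist_eq_norm]
      have hE : γ s - γ τ = (s - τ) • v := by simp only [hγ]; module
      rw [hE, norm_smul, Real.norm_eq_abs]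
      calc |s - τ| * ‖v‖ ≤ |s - τ| * (‖v‖ + 1) := by
            apply mul_le_mul_of_nonneg_left (by linarith) (abs_nonneg _)
        _ < r := hs
    have habs : |(-(δ/2) : ℝ)| * (‖v‖ + 1) < r := by
      rw [abs_neg, abs_of_pos (by linarith)]
      calc δ / 2 * (‖v‖ + 1) < δ * (‖v‖ + 1) := by
            apply mul_lt_mul_of_pos_right (by linarith) hv1
        _ ≤ r / (‖v‖ + 1) * (‖v‖ + 1) := mul_le_mul_of_nonneg_right hδr (le_of_lt hv1)
        _ = r := div_mul_cancel₀ r (ne_of_gt hv1)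
    have habs2 : |((δ/2) : ℝ)| * (‖v‖ + 1) < r := by rwa [← abs_neg]
    have hb1 : γ t1 ∈ Metric.ball (γ τ) r := hdist t1 (by simp only [ht1]; ring_nf; ring_nf at habs; exact habs)
    have hb2 : γ t2 ∈ Metric.ball (γ τ) r := hdist t2 (by simp only [ht2]; ring_nf; ring_nf at habs2; exact habs2)
    have hmid : (1/2 : ℝ) • γ t1 + (1/2 : ℝ) • γ t2 = γ τ := by
      simp only [hγ, ht1, ht2]; module
    have hineq := hconc.2 hb1 hb2 (by norm_num : (0:ℝ) ≤ 1/2) (by norm_num : (0:ℝ) ≤ 1/2)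
      (by norm_num : (1/2 : ℝ) + 1/2 = 1)
    rw [hmid] at hineq
    simp only [smul_eq_mul] at hineq
    -- hineq : 1/2 * h (γ t1) + 1/2 * h (γ t2) ≤ h (γ τ)
    have hdineq : (d t1 + d t2) / 2 ≤ d τ := by
      simp only [hd, hg, ht1, ht2]
      ring_nf
      simp only [ht1, ht2] at hineq
      ring_nf at hineq
      linarith
    have hdt1 : c ≤ d t1 := hmmin ht1I
    have hdt2 : c ≤ d t2 := hmmin ht2I
    clear_value t2 t1 δ c d g γ v
    have hdt1c : d t1 = c := by
      have h1 : d t1 ≤ c := by linarith [hdineq, hdt2, hdτ]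
      linarith [hdt1]
    have ht1A : t1 ∈ A := by rw [hA]; exact ⟨ht1I, hdt1c⟩
    have : τ ≤ t1 := hτlb ht1A
    simp only [ht1] at this
    linarith
  -- conclude
  have hbI : b ∈ Set.Icc (0:ℝ) 1 := ⟨hb, by linarith⟩
  have hkb := key b hbI
  have hg0 : g 0 = h x := by simp [hg, hγ]
  have hg1 : g 1 = h y := by
    simp only [hg, hγ, hv, one_smul]
    congr 1
    abel
  have hxy : a • x + b • y = γ b := by
    have hab' : a = 1 - b := by linarith
    simp only [hγ, hv, hab']
    module
  rw [hxy]
  simp only [smul_eq_mul]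
  simp only [hd, hg0, hg1] at hkb
  have hab' : a = 1 - b := by linarith
  rw [hab']
  linarith
end

section
/- Let q be a C² function near r = 2 with q(2) = 0, q'(2) < 0 and q''(2) + (1/2)q'(2) > 0, and let α ∈ (0, 1/2). Then for r < 2 sufficiently close to 2, where q > 0, one has (q^α)'(r) < 0 and (q^α)''(r) < 0. -/
/-- If q is C² near r = 2 with q(2) = 0, q'(2) < 0,
q''(2) + (1/2)q'(2) > 0, q > 0 on (2−δ, 2), and α ∈ (0, 1/2), then for r < 2
sufficiently close to 2 one has (q^α)'(r) < 0 and (q^α)''(r) < 0. -/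
theorem stmt8 (q : ℝ → ℝ) (hq : ContDiff ℝ 2 q) (δ : ℝ) (hδ : 0 < δ)
    (hq2 : q 2 = 0) (hqpos : ∀ r ∈ Set.Ioo (2 - δ) 2, 0 < q r)
    (hq' : deriv q 2 < 0) (hq'' : deriv (deriv q) 2 + (1 / 2) * deriv q 2 > 0)
    (α : ℝ) (hα : α ∈ Set.Ioo (0 : ℝ) (1 / 2)) :
    ∃ δ' > 0, ∀ r ∈ Set.Ioo (2 - δ') 2,
      deriv (fun s => q s ^ α) r < 0 ∧ deriv (deriv (fun s => q s ^ α)) r < 0 := by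
  obtain ⟨hα0, hα12⟩ := hα
  have hα1 : α - 1 < 0 := by linarith
  have hqd : Differentiable ℝ q := hq.differentiable two_ne_zero
  have hq'c : ContDiff ℝ 1 (deriv q) := by
    exact (contDiff_succ_iff_deriv.mp (show ContDiff ℝ (1 + 1) q by norm_num [hq])).2.2
  have hq'd : Differentiable ℝ (deriv q) := hq'c.differentiable one_ne_zero
  have hq'cont : Continuous (deriv q) := hq'd.continuous
  have hq''cont : Continuous (deriv (deriv q)) := hq'c.continuous_deriv le_rfl
  -- g = (α-1) q'² + q q''
  set g : ℝ → ℝ := fun x => (α - 1) * (deriv q x) ^ 2 + q x * deriv (deriv q) x with hg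
  have hgcont : Continuous g := by
    apply Continuous.add
    · exact (continuous_const.mul (hq'cont.pow 2))
    · exact (hqd.continuous.mul hq''cont)
  have hg2 : g 2 < 0 := by
    simp only [hg, hq2, zero_mul, add_zero]
    nlinarith [mul_pos (neg_pos.mpr hq') (neg_pos.mpr hq')]
  have ev1 : ∀ᶠ x in nhds 2, deriv q x < 0 ∧ g x < 0 := by
    filter_upwards [hq'cont.continuousAt.eventually_lt continuousAt_const hq',
      hgcont.continuousAt.eventually_lt continuousAt_const hg2] with x h1 h2
    exact ⟨h1, h2⟩
  rw [Metric.eventually_nhds_iff] at ev1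
  obtain ⟨ε, hε, hball⟩ := ev1
  refine ⟨min δ ε, lt_min hδ hε, ?_⟩
  intro r hr
  have hrδ : r ∈ Set.Ioo (2 - δ) 2 :=
    ⟨lt_of_le_of_lt (by simp [min_le_left]; linarith [min_le_left δ ε]) hr.1, hr.2⟩
  have hrball : deriv q r < 0 ∧ g r < 0 := by
    apply hball
    rw [Real.dist_eq, abs_lt]
    constructor
    · have := min_le_right δ ε; linarith [hr.1, hr.2]
    · linarith [hr.2, hε]
  have hqr : 0 < q r := hqpos r hrδ
  -- derivative formula on the open set Ioo (2-δ) 2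
  have hderiv : ∀ s ∈ Set.Ioo (2 - δ) 2,
      HasDerivAt (fun x => q x ^ α) (α * q s ^ (α - 1) * deriv q s) s := by
    intro s hs
    have hqs : 0 < q s := hqpos s hs
    have h1 : HasDerivAt (fun x : ℝ => x ^ α) (α * q s ^ (α - 1)) (q s) :=
      Real.hasDerivAt_rpow_const (Or.inl (ne_of_gt hqs))
    have := h1.comp s (hqd s).hasDerivAt
    simpa [mul_assoc, Function.comp_def] using this
  have hEqOn : Set.EqOn (deriv fun s => q s ^ α)
      (fun s => α * q s ^ (α - 1) * deriv q s) (Set.Ioo (2 - δ) 2) := fun s hs =>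
    (hderiv s hs).deriv
  have hfirst : deriv (fun s => q s ^ α) r < 0 := by
    rw [hEqOn hrδ]
    have : 0 < α * q r ^ (α - 1) := mul_pos hα0 (Real.rpow_pos_of_pos hqr _)
    exact mul_neg_of_pos_of_neg this hrball.1
  refine ⟨hfirst, ?_⟩
  -- second derivative
  have hev : (deriv fun s => q s ^ α) =ᶠ[nhds r]
      (fun s => α * q s ^ (α - 1) * deriv q s) :=
    Filter.eventuallyEq_of_mem (isOpen_Ioo.mem_nhds hrδ) hEqOn
  rw [hev.deriv_eq]
  have h2 : HasDerivAt (fun s => α * q s ^ (α - 1))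
      (α * ((α - 1) * q r ^ (α - 2) * deriv q r)) r := by
    have h1 : HasDerivAt (fun x : ℝ => x ^ (α - 1)) ((α - 1) * q r ^ (α - 1 - 1)) (q r) :=
      Real.hasDerivAt_rpow_const (Or.inl (ne_of_gt hqr))
    have := (h1.comp r (hqd r).hasDerivAt).const_mul α
    have heq : α - 1 - 1 = α - 2 := by ring
    simpa [heq, mul_assoc] using this
  have h3 : HasDerivAt (fun s => α * q s ^ (α - 1) * deriv q s)
      (α * ((α - 1) * q r ^ (α - 2) * deriv q r) * deriv q r
        + α * q r ^ (α - 1) * deriv (deriv q) r) r :=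
    h2.mul (hq'd r).hasDerivAt
  rw [h3.deriv]
  have hkey : α * ((α - 1) * q r ^ (α - 2) * deriv q r) * deriv q r
        + α * q r ^ (α - 1) * deriv (deriv q) r
      = α * q r ^ (α - 2) * g r := by
    rw [hg, show α - 1 = α - 2 + 1 by ring, Real.rpow_add_one (ne_of_gt hqr)]
    ring
  rw [hkey]
  exact mul_neg_of_pos_of_neg (mul_pos hα0 (Real.rpow_pos_of_pos hqr _)) hrball.2
end

section
/- Suppose u(x, t) is C⁴ on ℝⁿ × [0, T], X : [0, T] → ℝⁿ is C¹ with Ẋ(t) = −∇u(X(t), t), u_t = Δu, and Δu(X(t), t) = |∇u(X(t), t)|² for all t. Then Δ²u − 3∇Δu·∇u + 2 Σ_{i,j} u_{ij} u_i u_j = 0 along (X(t), t). -/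
set_option maxSynthPendingDepth 2
set_option maxHeartbeats 2000000
open ContinuousLinearMap

section helpers
variable {G M N : Type*} [NormedAddCommGroup G] [NormedSpace ℝ G]
  [NormedAddCommGroup M] [NormedSpace ℝ M] [NormedAddCommGroup N] [NormedSpace ℝ N]

lemma peel1 {g : G → M →L[ℝ] N} {x : G} (hg : DifferentiableAt ℝ g x) (w : M) (v : G) :
    fderiv ℝ (fun y => g y w) x v = fderiv ℝ g x v w := by
  have h : HasFDerivAt (fun y => g y w)
      ((ContinuousLinearMap.apply ℝ N w).comp (fderiv ℝ g x)) x :=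
    (ContinuousLinearMap.apply ℝ N w).hasFDerivAt.comp x hg.hasFDerivAt
  rw [h.fderiv]; rfl

/-- slice -/
lemma sliceX {g : G × ℝ → M} {x : G} {t : ℝ} (hg : DifferentiableAt ℝ g (x, t)) (v : G) :
    fderiv ℝ (fun x' => g (x', t)) x v = fderiv ℝ g (x, t) (v, 0) := by
  have h : HasFDerivAt (fun x' : G => g (x', t))
      ((fderiv ℝ g (x, t)).comp (inl ℝ G ℝ)) x :=
    hg.hasFDerivAt.comp x (hasFDerivAt_prodMk_left x t)
  rw [h.fderiv]; rfl

/-- slice derivative in the time variable -/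
lemma sliceT {g : G × ℝ → M} {x : G} {t : ℝ} (hg : DifferentiableAt ℝ g (x, t)) :
    deriv (fun s => g (x, s)) t = fderiv ℝ g (x, t) (0, 1) := by
  have h1 : HasDerivAt (fun s : ℝ => ((x, s) : G × ℝ)) ((0 : G), (1 : ℝ)) t :=
    HasDerivAt.prodMk (hasDerivAt_const t x) (hasDerivAt_id t)
  exact (hg.hasFDerivAt.comp_hasDerivAt t h1).deriv


lemma peel2 {g : G → M →L[ℝ] (M →L[ℝ] N)} {x : G} (hg : DifferentiableAt ℝ g x)
    (b c : M) (a : G) :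
    fderiv ℝ (fun y => g y b c) x a = fderiv ℝ g x a b c := by
  have hg1 : DifferentiableAt ℝ (fun y => g y b) x := hg.clm_apply (differentiableAt_const b)
  rw [peel1 hg1 c a, peel1 hg b a]

lemma peel3 {g : G → M →L[ℝ] (M →L[ℝ] (M →L[ℝ] N))} {x : G} (hg : DifferentiableAt ℝ g x)
    (b c d : M) (a : G) :
    fderiv ℝ (fun y => g y b c d) x a = fderiv ℝ g x a b c d := by
  have hg1 : DifferentiableAt ℝ (fun y => g y b) x := hg.clm_apply (differentiableAt_const b)
  have hg2 : DifferentiableAt ℝ (fun y => g y b c) x :=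
    hg1.clm_apply (differentiableAt_const c)
  rw [peel1 hg2 d a, peel2 hg b c a]

lemma i4_unfold (f : G → N) (x : G) (m : Fin 4 → G) :
    iteratedFDeriv ℝ 4 f x m =
      fderiv ℝ (fderiv ℝ (fderiv ℝ (fderiv ℝ f))) x (m 0) (m 1) (m 2) (m 3) := by
  rw [iteratedFDeriv_succ_apply_right (n := 3), iteratedFDeriv_succ_apply_right (n := 2),
    iteratedFDeriv_two_apply]
  simp [Fin.init]

end helpers

section conv
variable {G : Type*} [NormedAddCommGroup G] [NormedSpace ℝ G]

variable {H : Type*} [NormedAddCommGroup H] [NormedSpace ℝ H]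

-- pure application lemmas for the derivative tower of a C⁴ function
lemma dapp1 {F : H → ℝ} (hF : ContDiff ℝ 4 F) (p : H) (v w : H) :
    fderiv ℝ (fun q => fderiv ℝ F q w) p v = fderiv ℝ (fderiv ℝ F) p v w :=
  peel1 ((hF.fderiv_right (m := 3) (by norm_num)).differentiable (by norm_num) _) w v

lemma dapp2 {F : H → ℝ} (hF : ContDiff ℝ 4 F) (p : H) (a b c : H) :
    fderiv ℝ (fun q => fderiv ℝ (fderiv ℝ F) q b c) p a =
      fderiv ℝ (fderiv ℝ (fderiv ℝ F)) p a b c :=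
  peel2 (((hF.fderiv_right (m := 3) (by norm_num)).fderiv_right (m := 2)
    (by norm_num)).differentiable (by norm_num) _) b c a

lemma dapp3 {F : H → ℝ} (hF : ContDiff ℝ 4 F) (p : H) (a b c d : H) :
    fderiv ℝ (fun q => fderiv ℝ (fderiv ℝ (fderiv ℝ F)) q b c d) p a =
      fderiv ℝ (fderiv ℝ (fderiv ℝ (fderiv ℝ F))) p a b c d :=
  peel3 ((((hF.fderiv_right (m := 3) (by norm_num)).fderiv_right (m := 2)
    (by norm_num)).fderiv_right (m := 1) (by norm_num)).differentiable (by norm_num) _) b c d a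

variable {F : G × ℝ → ℝ} (hF : ContDiff ℝ 4 F)

include hF

lemma convA1 (x : G) (t : ℝ) (v : G) :
    fderiv ℝ (fun x' => F (x', t)) x v = fderiv ℝ F (x, t) (v, 0) :=
  sliceX (hF.differentiable (by norm_num) _) v

lemma convA2 (x : G) (t : ℝ) (v w : G) :
    fderiv ℝ (fun x' => fderiv ℝ F (x', t) (w, 0)) x v =
      fderiv ℝ (fderiv ℝ F) (x, t) (v, 0) (w, 0) := by
  have hF1 : ContDiff ℝ 3 (fderiv ℝ F) := hF.fderiv_right (by norm_num)
  have h : DifferentiableAt ℝ (fun q : G × ℝ => fderiv ℝ F q (w, 0)) (x, t) :=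
    (hF1.differentiable (by norm_num) _).clm_apply (differentiableAt_const _)
  exact (sliceX h v).trans (peel1 (hF1.differentiable (by norm_num) _) _ _)

lemma convA3 (x : G) (t : ℝ) (a b c : G) :
    fderiv ℝ (fun x' => fderiv ℝ (fderiv ℝ F) (x', t) (b, 0) (c, 0)) x a =
      fderiv ℝ (fderiv ℝ (fderiv ℝ F)) (x, t) (a, 0) (b, 0) (c, 0) := by
  have hF2 : ContDiff ℝ 2 (fderiv ℝ (fderiv ℝ F)) :=
    (hF.fderiv_right (m := 3) (by norm_num)).fderiv_right (by norm_num)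
  have h : DifferentiableAt ℝ (fun q : G × ℝ => fderiv ℝ (fderiv ℝ F) q (b, 0) (c, 0)) (x, t) :=
    ((hF2.differentiable (by norm_num) _).clm_apply (differentiableAt_const _)).clm_apply
      (differentiableAt_const _)
  exact (sliceX h a).trans (peel2 (hF2.differentiable (by norm_num) _) _ _ _)

lemma convA4 (x : G) (t : ℝ) (a b c d : G) :
    fderiv ℝ (fun x' => fderiv ℝ (fderiv ℝ (fderiv ℝ F)) (x', t) (b, 0) (c, 0) (d, 0)) x a =
      fderiv ℝ (fderiv ℝ (fderiv ℝ (fderiv ℝ F))) (x, t) (a, 0) (b, 0) (c, 0) (d, 0) := by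
  have hF3 : ContDiff ℝ 1 (fderiv ℝ (fderiv ℝ (fderiv ℝ F))) :=
    ((hF.fderiv_right (m := 3) (by norm_num)).fderiv_right (m := 2)
      (by norm_num)).fderiv_right (by norm_num)
  have h : DifferentiableAt ℝ
      (fun q : G × ℝ => fderiv ℝ (fderiv ℝ (fderiv ℝ F)) q (b, 0) (c, 0) (d, 0)) (x, t) :=
    (((hF3.differentiable (by norm_num) _).clm_apply (differentiableAt_const _)).clm_apply
      (differentiableAt_const _)).clm_apply (differentiableAt_const _)
  exact (sliceX h a).trans (peel3 (hF3.differentiable (by norm_num) _) _ _ _ _)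

lemma convS2 (x : G) (t : ℝ) (v w : G) :
    fderiv ℝ (fderiv ℝ (fun x' => F (x', t))) x v w =
      fderiv ℝ (fderiv ℝ F) (x, t) (v, 0) (w, 0) := by
  have hsl : ContDiff ℝ 4 (fun x' : G => F (x', t)) :=
    hF.comp (contDiff_id.prodMk contDiff_const)
  have hs1 : ContDiff ℝ 3 (fderiv ℝ (fun x' : G => F (x', t))) := hsl.fderiv_right (by norm_num)
  rw [← peel1 (hs1.differentiable (by norm_num) _) w v]
  have : (fun x'' => fderiv ℝ (fun x' => F (x', t)) x'' w)
      = fun x'' => fderiv ℝ F (x'', t) (w, 0) := funext fun x'' => convA1 hF x'' t w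
  rw [this]
  exact convA2 hF x t v w

lemma convS3 (x : G) (t : ℝ) (a b c : G) :
    fderiv ℝ (fderiv ℝ (fderiv ℝ (fun x' => F (x', t)))) x a b c =
      fderiv ℝ (fderiv ℝ (fderiv ℝ F)) (x, t) (a, 0) (b, 0) (c, 0) := by
  have hsl : ContDiff ℝ 4 (fun x' : G => F (x', t)) :=
    hF.comp (contDiff_id.prodMk contDiff_const)
  have hs2 : ContDiff ℝ 2 (fderiv ℝ (fderiv ℝ (fun x' : G => F (x', t)))) :=
    (hsl.fderiv_right (m := 3) (by norm_num)).fderiv_right (by norm_num)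
  rw [← peel2 (hs2.differentiable (by norm_num) _) b c a]
  have : (fun x'' => fderiv ℝ (fderiv ℝ (fun x' => F (x', t))) x'' b c)
      = fun x'' => fderiv ℝ (fderiv ℝ F) (x'', t) (b, 0) (c, 0) :=
    funext fun x'' => convS2 hF x'' t b c
  rw [this]
  exact convA3 hF x t a b c

lemma convS4 (x : G) (t : ℝ) (a b c d : G) :
    fderiv ℝ (fderiv ℝ (fderiv ℝ (fderiv ℝ (fun x' => F (x', t))))) x a b c d =
      fderiv ℝ (fderiv ℝ (fderiv ℝ (fderiv ℝ F))) (x, t) (a, 0) (b, 0) (c, 0) (d, 0) := by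
  have hsl : ContDiff ℝ 4 (fun x' : G => F (x', t)) :=
    hF.comp (contDiff_id.prodMk contDiff_const)
  have hs3 : ContDiff ℝ 1 (fderiv ℝ (fderiv ℝ (fderiv ℝ (fun x' : G => F (x', t))))) :=
    ((hsl.fderiv_right (m := 3) (by norm_num)).fderiv_right (m := 2)
      (by norm_num)).fderiv_right (by norm_num)
  rw [← peel3 (hs3.differentiable (by norm_num) _) b c d a]
  have : (fun x'' => fderiv ℝ (fderiv ℝ (fderiv ℝ (fun x' => F (x', t)))) x'' b c d)
      = fun x'' => fderiv ℝ (fderiv ℝ (fderiv ℝ F)) (x'', t) (b, 0) (c, 0) (d, 0) :=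
    funext fun x'' => convS3 hF x'' t b c d
  rw [this]
  exact convA4 hF x t a b c d

lemma convI2 (x : G) (t : ℝ) (v w : G) :
    iteratedFDeriv ℝ 2 (fun x' => F (x', t)) x ![v, w] =
      fderiv ℝ (fderiv ℝ F) (x, t) (v, 0) (w, 0) := by
  rw [iteratedFDeriv_two_apply]
  simpa using convS2 hF x t v w

lemma convI4 (x : G) (t : ℝ) (a b c d : G) :
    iteratedFDeriv ℝ 4 (fun x' => F (x', t)) x ![a, b, c, d] =
      fderiv ℝ (fderiv ℝ (fderiv ℝ (fderiv ℝ F))) (x, t) (a, 0) (b, 0) (c, 0) (d, 0) := by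
  rw [i4_unfold]
  simpa using convS4 hF x t a b c d

end conv

set_option maxSynthPendingDepth 3
set_option maxHeartbeats 2000000

noncomputable def ee (n : ℕ) (i : Fin n) : EuclideanSpace ℝ (Fin n) :=
  EuclideanSpace.single i 1

noncomputable def ii (n : ℕ) (i : Fin n) : EuclideanSpace ℝ (Fin n) × ℝ := (ee n i, 0)

noncomputable def tau (n : ℕ) : EuclideanSpace ℝ (Fin n) × ℝ := (0, 1)

lemma euclid_pair (n : ℕ) (v : EuclideanSpace ℝ (Fin n)) :
    ((v, 0) : EuclideanSpace ℝ (Fin n) × ℝ) = ∑ i, v i • ii n i := by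
  rw [Prod.ext_iff]
  constructor
  · ext j
    simp only [ii, ee, Prod.smul_mk, Prod.fst_sum, smul_zero]
    have : (∑ x : Fin n, v x • EuclideanSpace.single x 1) j
        = ∑ x : Fin n, (v x • (EuclideanSpace.single x 1 : EuclideanSpace ℝ (Fin n))) j :=
      by rw [WithLp.ofLp_sum]; exact Finset.sum_apply j Finset.univ _
    rw [this]
    simp [EuclideanSpace.single_apply]
  · simp [ii, Prod.snd_sum]


lemma sum_algebra {n : ℕ} (A : Fin n → ℝ) (B : Fin n → Fin n → ℝ)
    (C : Fin n → Fin n → Fin n → ℝ) (D : Fin n → Fin n → ℝ) :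
    (∑ i, ∑ j, D i j) - ∑ i, 3 * ((∑ j, C i j j) * A i) + ∑ x, ∑ i, 2 * (B x i * A x * A i)
      = (∑ x, ∑ k, -A k * C k x x + ∑ i, ∑ j, D i j)
        - (∑ x, ∑ i, 2 * A x * (-A i * B i x) + ∑ x, ∑ i, 2 * A x * C x i i) := by
  have e1 : ∑ x : Fin n, ∑ k : Fin n, -A k * C k x x
      = -∑ i : Fin n, (∑ j, C i j j) * A i := by
    rw [Finset.sum_comm, ← Finset.sum_neg_distrib]
    refine Finset.sum_congr rfl fun i _ => ?_
    rw [Finset.sum_mul, ← Finset.sum_neg_distrib]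
    exact Finset.sum_congr rfl fun j _ => by ring
  have e2 : ∑ x : Fin n, ∑ i : Fin n, 2 * A x * (-A i * B i x)
      = -∑ x : Fin n, ∑ i : Fin n, 2 * (B x i * A x * A i) := by
    rw [Finset.sum_comm, ← Finset.sum_neg_distrib]
    refine Finset.sum_congr rfl fun x _ => ?_
    rw [← Finset.sum_neg_distrib]
    exact Finset.sum_congr rfl fun i _ => by ring
  have e3 : ∑ x : Fin n, ∑ i : Fin n, 2 * A x * C x i i
      = 2 * ∑ i : Fin n, (∑ j, C i j j) * A i := by
    rw [Finset.mul_sum]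
    refine Finset.sum_congr rfl fun x _ => ?_
    rw [Finset.sum_mul, Finset.mul_sum]
    exact Finset.sum_congr rfl fun i _ => by ring
  have e4 : ∑ i : Fin n, 3 * ((∑ j, C i j j) * A i)
      = 3 * ∑ i : Fin n, (∑ j, C i j j) * A i := by rw [Finset.mul_sum]
  rw [e1, e2, e3, e4]
  ring

open Set Filter Topology ContinuousLinearMap in
theorem key (n : ℕ) (T : ℝ) (hT : 0 < T)
    (F : EuclideanSpace ℝ (Fin n) × ℝ → ℝ) (hF : ContDiff ℝ 4 F)
    (X : ℝ → EuclideanSpace ℝ (Fin n)) (hX : ContDiff ℝ 1 X)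
    (hstef : ∀ t ∈ Set.Icc (0:ℝ) T, ∀ i, (deriv X t) i = -(fderiv ℝ F (X t, t) (ii n i)))
    (hheat : ∀ (x : EuclideanSpace ℝ (Fin n)) (t : ℝ), t ∈ Set.Icc (0:ℝ) T →
      fderiv ℝ F (x, t) (tau n) = ∑ k, fderiv ℝ (fderiv ℝ F) (x, t) (ii n k) (ii n k))
    (hcomp : ∀ t ∈ Set.Icc (0:ℝ) T,
      (∑ j, fderiv ℝ (fderiv ℝ F) (X t, t) (ii n j) (ii n j))
        = ∑ i, (fderiv ℝ F (X t, t) (ii n i)) ^ 2) :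
    ∀ t ∈ Set.Icc (0:ℝ) T,
      (∑ i, ∑ j, fderiv ℝ (fderiv ℝ (fderiv ℝ (fderiv ℝ F))) (X t, t)
          (ii n i) (ii n i) (ii n j) (ii n j))
      - 3 * (∑ i, (∑ j, fderiv ℝ (fderiv ℝ (fderiv ℝ F)) (X t, t) (ii n i) (ii n j) (ii n j))
          * fderiv ℝ F (X t, t) (ii n i))
      + 2 * (∑ i, ∑ j, fderiv ℝ (fderiv ℝ F) (X t, t) (ii n i) (ii n j)
          * fderiv ℝ F (X t, t) (ii n i) * fderiv ℝ F (X t, t) (ii n j)) = 0 := by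
  have hF1 : ContDiff ℝ 3 (fderiv ℝ F) := hF.fderiv_right (by norm_num)
  have hF2 : ContDiff ℝ 2 (fderiv ℝ (fderiv ℝ F)) := hF1.fderiv_right (by norm_num)
  have hF3 : ContDiff ℝ 1 (fderiv ℝ (fderiv ℝ (fderiv ℝ F))) := hF2.fderiv_right (by norm_num)
  have hd1 : ∀ b, Differentiable ℝ (fun q => fderiv ℝ F q b) := fun b q =>
    (hF1.differentiable (by norm_num) q).clm_apply (differentiableAt_const b)
  have hd2 : ∀ b c, Differentiable ℝ (fun q => fderiv ℝ (fderiv ℝ F) q b c) := fun b c q =>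
    ((hF2.differentiable (by norm_num) q).clm_apply (differentiableAt_const b)).clm_apply
      (differentiableAt_const c)
  have hd3 : ∀ b c d, Differentiable ℝ
      (fun q => fderiv ℝ (fderiv ℝ (fderiv ℝ F)) q b c d) := fun b c d q =>
    (((hF3.differentiable (by norm_num) q).clm_apply (differentiableAt_const b)).clm_apply
      (differentiableAt_const c)).clm_apply (differentiableAt_const d)
  have hU : IsOpen ((univ : Set (EuclideanSpace ℝ (Fin n))) ×ˢ Ioo (0:ℝ) T) :=
    isOpen_univ.prod isOpen_Ioo
  -- heat equation as eventual equality near interior points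
  have hev : ∀ q : EuclideanSpace ℝ (Fin n) × ℝ, q ∈ (univ ×ˢ Ioo (0:ℝ) T) →
      (fun r => fderiv ℝ F r (tau n)) =ᶠ[𝓝 q]
        (fun r => ∑ k, fderiv ℝ (fderiv ℝ F) r (ii n k) (ii n k)) := by
    intro q hq
    filter_upwards [hU.mem_nhds hq] with r hr
    simpa using hheat r.1 r.2 (Ioo_subset_Icc_self hr.2)
  -- first commutation: ∂_i u_t = ∂_i Δu at interior points
  have hNeed1 : ∀ q ∈ (univ : Set (EuclideanSpace ℝ (Fin n))) ×ˢ Ioo (0:ℝ) T, ∀ i : Fin n,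
      fderiv ℝ (fderiv ℝ F) q (tau n) (ii n i)
        = ∑ k, fderiv ℝ (fderiv ℝ (fderiv ℝ F)) q (ii n i) (ii n k) (ii n k) := by
    intro q hq i
    have hsym : fderiv ℝ (fderiv ℝ F) q (tau n) (ii n i)
        = fderiv ℝ (fderiv ℝ F) q (ii n i) (tau n) :=
      (hF.contDiffAt.isSymmSndFDerivAt (by norm_num)) (tau n) (ii n i)
    rw [hsym, ← dapp1 hF q (ii n i) (tau n), (hev q hq).fderiv_eq,
      fderiv_fun_sum (fun k _ => hd2 (ii n k) (ii n k) q)]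
    rw [ContinuousLinearMap.sum_apply]
    exact Finset.sum_congr rfl fun k _ => dapp2 hF q (ii n i) (ii n k) (ii n k)
  -- second commutation: ∂_j∂_j u_t = ∂_j∂_j Δu at interior points
  have hNeed2 : ∀ q ∈ (univ : Set (EuclideanSpace ℝ (Fin n))) ×ˢ Ioo (0:ℝ) T, ∀ j : Fin n,
      fderiv ℝ (fderiv ℝ (fderiv ℝ F)) q (tau n) (ii n j) (ii n j)
        = ∑ k, fderiv ℝ (fderiv ℝ (fderiv ℝ (fderiv ℝ F))) q
            (ii n j) (ii n j) (ii n k) (ii n k) := by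
    intro q hq j
    have hsym1 : fderiv ℝ (fderiv ℝ (fderiv ℝ F)) q (tau n) (ii n j)
        = fderiv ℝ (fderiv ℝ (fderiv ℝ F)) q (ii n j) (tau n) :=
      (hF1.contDiffAt.isSymmSndFDerivAt (by norm_num)) (tau n) (ii n j)
    have hswap : fderiv ℝ (fderiv ℝ (fderiv ℝ F)) q (ii n j) (tau n) (ii n j)
        = fderiv ℝ (fderiv ℝ (fderiv ℝ F)) q (ii n j) (ii n j) (tau n) := by
      rw [← dapp2 hF q (ii n j) (tau n) (ii n j), ← dapp2 hF q (ii n j) (ii n j) (tau n)]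
      have hfg : (fun r => fderiv ℝ (fderiv ℝ F) r (tau n) (ii n j))
          = fun r => fderiv ℝ (fderiv ℝ F) r (ii n j) (tau n) := by
        funext r
        exact (hF.contDiffAt.isSymmSndFDerivAt (by norm_num)) (tau n) (ii n j)
      rw [hfg]
    have hev2 : (fun r => fderiv ℝ (fderiv ℝ F) r (ii n j) (tau n)) =ᶠ[𝓝 q]
        (fun r => ∑ k, fderiv ℝ (fderiv ℝ (fderiv ℝ F)) r (ii n j) (ii n k) (ii n k)) := by
      filter_upwards [hU.mem_nhds hq] with r hr
      have := hNeed1 r hr j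
      rw [← this]
      exact ((hF.contDiffAt.isSymmSndFDerivAt (by norm_num)) (ii n j) (tau n))
    rw [DFunLike.congr_fun (hsym1) (ii n j), hswap, ← dapp2 hF q (ii n j) (ii n j) (tau n)]
    rw [hev2.fderiv_eq, fderiv_fun_sum (fun k _ => hd3 (ii n j) (ii n k) (ii n k) q)]
    rw [ContinuousLinearMap.sum_apply]
    exact Finset.sum_congr rfl fun k _ => dapp3 hF q (ii n j) (ii n j) (ii n k) (ii n k)
  -- main interior computation
  have hmain : ∀ t₀ ∈ Ioo (0:ℝ) T,
      (∑ i, ∑ j, fderiv ℝ (fderiv ℝ (fderiv ℝ (fderiv ℝ F))) (X t₀, t₀)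
          (ii n i) (ii n i) (ii n j) (ii n j))
      - 3 * (∑ i, (∑ j, fderiv ℝ (fderiv ℝ (fderiv ℝ F)) (X t₀, t₀) (ii n i) (ii n j) (ii n j))
          * fderiv ℝ F (X t₀, t₀) (ii n i))
      + 2 * (∑ i, ∑ j, fderiv ℝ (fderiv ℝ F) (X t₀, t₀) (ii n i) (ii n j)
          * fderiv ℝ F (X t₀, t₀) (ii n i) * fderiv ℝ F (X t₀, t₀) (ii n j)) = 0 := by
    intro t₀ ht₀
    have htIcc : t₀ ∈ Icc (0:ℝ) T := Ioo_subset_Icc_self ht₀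
    have hpU : ((X t₀, t₀) : EuclideanSpace ℝ (Fin n) × ℝ) ∈
        (univ : Set (EuclideanSpace ℝ (Fin n))) ×ˢ Ioo (0:ℝ) T := ⟨trivial, ht₀⟩
    have hXd : HasDerivAt X (deriv X t₀) t₀ := (hX.differentiable (by norm_num) t₀).hasDerivAt
    have hc : HasDerivAt (fun t => ((X t, t) : EuclideanSpace ℝ (Fin n) × ℝ))
        (deriv X t₀, 1) t₀ := hXd.prodMk (hasDerivAt_id t₀)
    -- derivative of the heat-deficit along the curve
    have hφ : ∀ j : Fin n, HasDerivAt
        (fun t => fderiv ℝ (fderiv ℝ F) (X t, t) (ii n j) (ii n j))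
        (fderiv ℝ (fderiv ℝ (fderiv ℝ F)) (X t₀, t₀) (deriv X t₀, 1) (ii n j) (ii n j)) t₀ := by
      intro j
      have h1 : HasDerivAt (fun t => fderiv ℝ (fderiv ℝ F) (X t, t) (ii n j) (ii n j))
          (fderiv ℝ (fun q => fderiv ℝ (fderiv ℝ F) q (ii n j) (ii n j)) (X t₀, t₀)
            (deriv X t₀, 1)) t₀ :=
        ((hd2 (ii n j) (ii n j) (X t₀, t₀)).hasFDerivAt).comp_hasDerivAt_of_eq t₀ hc rfl
      rwa [dapp2 hF (X t₀, t₀) (deriv X t₀, 1) (ii n j) (ii n j)] at h1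
    have hψ : ∀ i : Fin n, HasDerivAt
        (fun t => fderiv ℝ F (X t, t) (ii n i))
        (fderiv ℝ (fderiv ℝ F) (X t₀, t₀) (deriv X t₀, 1) (ii n i)) t₀ := by
      intro i
      have h1 : HasDerivAt (fun t => fderiv ℝ F (X t, t) (ii n i))
          (fderiv ℝ (fun q => fderiv ℝ F q (ii n i)) (X t₀, t₀) (deriv X t₀, 1)) t₀ :=
        ((hd1 (ii n i) (X t₀, t₀)).hasFDerivAt).comp_hasDerivAt_of_eq t₀ hc rfl
      rwa [dapp1 hF (X t₀, t₀) (deriv X t₀, 1) (ii n i)] at h1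
    have hg : HasDerivAt
        (fun t => (∑ j, fderiv ℝ (fderiv ℝ F) (X t, t) (ii n j) (ii n j))
          - ∑ i, (fderiv ℝ F (X t, t) (ii n i)) ^ 2)
        ((∑ j, fderiv ℝ (fderiv ℝ (fderiv ℝ F)) (X t₀, t₀) (deriv X t₀, 1) (ii n j) (ii n j))
          - ∑ i, 2 * (fderiv ℝ F (X t₀, t₀) (ii n i)) ^ 1
              * fderiv ℝ (fderiv ℝ F) (X t₀, t₀) (deriv X t₀, 1) (ii n i)) t₀ :=
      (HasDerivAt.fun_sum fun j _ => hφ j).sub (HasDerivAt.fun_sum fun i _ => (hψ i).pow 2)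
    have hzero : (fun t => (∑ j, fderiv ℝ (fderiv ℝ F) (X t, t) (ii n j) (ii n j))
          - ∑ i, (fderiv ℝ F (X t, t) (ii n i)) ^ 2) =ᶠ[𝓝 t₀] fun _ => (0:ℝ) := by
      filter_upwards [Ioo_mem_nhds ht₀.1 ht₀.2] with s hs
      have := hcomp s (Ioo_subset_Icc_self hs)
      simp [this]
    have hD0 : (∑ j, fderiv ℝ (fderiv ℝ (fderiv ℝ F)) (X t₀, t₀)
            (deriv X t₀, 1) (ii n j) (ii n j))
          - ∑ i, 2 * (fderiv ℝ F (X t₀, t₀) (ii n i)) ^ 1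
              * fderiv ℝ (fderiv ℝ F) (X t₀, t₀) (deriv X t₀, 1) (ii n i) = 0 := by
      have h0 := hg.congr_of_eventuallyEq hzero.symm
      exact h0.unique (hasDerivAt_const t₀ 0)
    -- expand the direction (Ẋ, 1) = (Ẋ, 0) + τ and Ẋ = −∇u
    have hVsplit : ((deriv X t₀, (1:ℝ)) : EuclideanSpace ℝ (Fin n) × ℝ)
        = (deriv X t₀, 0) + tau n := by
      simp [tau, Prod.ext_iff]
    have hVcoord : ∀ k, (deriv X t₀) k = -(fderiv ℝ F (X t₀, t₀) (ii n k)) :=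
      hstef t₀ htIcc
    have hpair : ((deriv X t₀, (0:ℝ)) : EuclideanSpace ℝ (Fin n) × ℝ)
        = ∑ k, (-(fderiv ℝ F (X t₀, t₀) (ii n k))) • ii n k := by
      rw [euclid_pair n (deriv X t₀)]
      exact Finset.sum_congr rfl fun k _ => by rw [hVcoord k]
    have hG3V : ∀ j, fderiv ℝ (fderiv ℝ (fderiv ℝ F)) (X t₀, t₀)
          (deriv X t₀, 1) (ii n j) (ii n j)
        = (∑ k, (-(fderiv ℝ F (X t₀, t₀) (ii n k)))
              * fderiv ℝ (fderiv ℝ (fderiv ℝ F)) (X t₀, t₀) (ii n k) (ii n j) (ii n j))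
          + ∑ k, fderiv ℝ (fderiv ℝ (fderiv ℝ (fderiv ℝ F))) (X t₀, t₀)
              (ii n j) (ii n j) (ii n k) (ii n k) := by
      intro j
      rw [hVsplit, map_add, ContinuousLinearMap.add_apply, ContinuousLinearMap.add_apply]
      congr 1
      · rw [hpair, map_sum, ContinuousLinearMap.sum_apply, ContinuousLinearMap.sum_apply]
        exact Finset.sum_congr rfl fun k _ => by
          rw [map_smul]; simp [smul_eq_mul]
      · exact hNeed2 _ hpU j
    have hG2V : ∀ i, fderiv ℝ (fderiv ℝ F) (X t₀, t₀) (deriv X t₀, 1) (ii n i)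
        = (∑ k, (-(fderiv ℝ F (X t₀, t₀) (ii n k)))
              * fderiv ℝ (fderiv ℝ F) (X t₀, t₀) (ii n k) (ii n i))
          + ∑ k, fderiv ℝ (fderiv ℝ (fderiv ℝ F)) (X t₀, t₀) (ii n i) (ii n k) (ii n k) := by
      intro i
      rw [hVsplit, map_add, ContinuousLinearMap.add_apply]
      congr 1
      · rw [hpair, map_sum, ContinuousLinearMap.sum_apply]
        exact Finset.sum_congr rfl fun k _ => by
          rw [map_smul]; simp [smul_eq_mul]
      · exact hNeed1 _ hpU i
    -- final algebra
    rw [← hD0]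
    simp only [hG3V, hG2V, pow_one, mul_add, Finset.sum_add_distrib, Finset.mul_sum]
    exact sum_algebra (fun i => fderiv ℝ F (X t₀, t₀) (ii n i))
      (fun i j => fderiv ℝ (fderiv ℝ F) (X t₀, t₀) (ii n i) (ii n j))
      (fun i j k => fderiv ℝ (fderiv ℝ (fderiv ℝ F)) (X t₀, t₀) (ii n i) (ii n j) (ii n k))
      (fun i j => fderiv ℝ (fderiv ℝ (fderiv ℝ (fderiv ℝ F))) (X t₀, t₀)
        (ii n i) (ii n i) (ii n j) (ii n j))
  -- continuity of the expression, and extension to the closed interval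
  have hXc : Continuous (fun t => ((X t, t) : EuclideanSpace ℝ (Fin n) × ℝ)) :=
    hX.continuous.prodMk continuous_id
  have hC1 : Continuous (fderiv ℝ F) := hF.continuous_fderiv (by norm_num)
  have hC2 : Continuous (fderiv ℝ (fderiv ℝ F)) := hF1.continuous_fderiv (by norm_num)
  have hC3 : Continuous (fderiv ℝ (fderiv ℝ (fderiv ℝ F))) :=
    hF2.continuous_fderiv (by norm_num)
  have hC4 : Continuous (fderiv ℝ (fderiv ℝ (fderiv ℝ (fderiv ℝ F)))) :=
    hF3.continuous_fderiv (by norm_num)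
  have hA : ∀ i, Continuous fun t => fderiv ℝ F (X t, t) (ii n i) :=
    fun i => (hC1.comp hXc).clm_apply continuous_const
  have hB : ∀ i j, Continuous fun t => fderiv ℝ (fderiv ℝ F) (X t, t) (ii n i) (ii n j) :=
    fun i j => ((hC2.comp hXc).clm_apply continuous_const).clm_apply continuous_const
  have hCc : ∀ i j k, Continuous fun t =>
      fderiv ℝ (fderiv ℝ (fderiv ℝ F)) (X t, t) (ii n i) (ii n j) (ii n k) :=
    fun i j k => (((hC3.comp hXc).clm_apply continuous_const).clm_apply
      continuous_const).clm_apply continuous_const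
  have hDc : ∀ i j, Continuous fun t =>
      fderiv ℝ (fderiv ℝ (fderiv ℝ (fderiv ℝ F))) (X t, t)
        (ii n i) (ii n i) (ii n j) (ii n j) :=
    fun i j => ((((hC4.comp hXc).clm_apply continuous_const).clm_apply
      continuous_const).clm_apply continuous_const).clm_apply continuous_const
  have hcont : Continuous (fun t =>
      (∑ i, ∑ j, fderiv ℝ (fderiv ℝ (fderiv ℝ (fderiv ℝ F))) (X t, t)
          (ii n i) (ii n i) (ii n j) (ii n j))
      - 3 * (∑ i, (∑ j, fderiv ℝ (fderiv ℝ (fderiv ℝ F)) (X t, t) (ii n i) (ii n j) (ii n j))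
          * fderiv ℝ F (X t, t) (ii n i))
      + 2 * (∑ i, ∑ j, fderiv ℝ (fderiv ℝ F) (X t, t) (ii n i) (ii n j)
          * fderiv ℝ F (X t, t) (ii n i) * fderiv ℝ F (X t, t) (ii n j))) := by
    refine Continuous.add (Continuous.sub ?_ ?_) ?_
    · exact continuous_finset_sum _ fun i _ => continuous_finset_sum _ fun j _ => hDc i j
    · exact continuous_const.mul (continuous_finset_sum _ fun i _ =>
        (continuous_finset_sum _ fun j _ => hCc i j j).mul (hA i))
    · exact continuous_const.mul (continuous_finset_sum _ fun i _ =>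
        continuous_finset_sum _ fun j _ => ((hB i j).mul (hA i)).mul (hA j))
  intro t ht
  have hclos : t ∈ closure (Ioo (0:ℝ) T) := by
    rw [closure_Ioo hT.ne]; exact ht
  exact Set.EqOn.closure (fun s hs => hmain s hs) hcont continuous_const hclos

open Set Filter Topology ContinuousLinearMap RealInnerProductSpace in
/-- Second compatibility condition for the Stefan problem: if u is C⁴,
Ẋ(t) = −∇u(X(t), t), u_t = Δu, and Δu = |∇u|² along (X(t), t), then
Δ²u − 3∇Δu·∇u + 2 Σ_{i,j} u_{ij} u_i u_j = 0 along (X(t), t). -/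
theorem stmt11 (n : ℕ) (T : ℝ) (hT : 0 < T)
    (u : EuclideanSpace ℝ (Fin n) → ℝ → ℝ)
    (hu : ContDiff ℝ 4 (fun p : EuclideanSpace ℝ (Fin n) × ℝ => u p.1 p.2))
    (X : ℝ → EuclideanSpace ℝ (Fin n)) (hX : ContDiff ℝ 1 X)
    (hstefan : ∀ t ∈ Set.Icc 0 T, deriv X t = -gradient (fun x => u x t) (X t))
    (hheat : ∀ (x : EuclideanSpace ℝ (Fin n)), ∀ t ∈ Set.Icc 0 T,
      deriv (u x) t = ∑ i : Fin n,
        iteratedFDeriv ℝ 2 (fun x' => u x' t) x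
          ![EuclideanSpace.single i 1, EuclideanSpace.single i 1])
    (hcomp1 : ∀ t ∈ Set.Icc 0 T,
      (∑ i : Fin n, iteratedFDeriv ℝ 2 (fun x' => u x' t) (X t)
          ![EuclideanSpace.single i 1, EuclideanSpace.single i 1])
        = ∑ i : Fin n,
            (fderiv ℝ (fun x' => u x' t) (X t) (EuclideanSpace.single i 1)) ^ 2) :
    ∀ t ∈ Set.Icc 0 T,
      (∑ i : Fin n, ∑ j : Fin n, iteratedFDeriv ℝ 4 (fun x' => u x' t) (X t)
          ![EuclideanSpace.single i 1, EuclideanSpace.single i 1,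
            EuclideanSpace.single j 1, EuclideanSpace.single j 1])
      - 3 * (∑ i : Fin n,
          fderiv ℝ (fun x' => ∑ j : Fin n, iteratedFDeriv ℝ 2 (fun x'' => u x'' t) x'
              ![EuclideanSpace.single j 1, EuclideanSpace.single j 1]) (X t)
            (EuclideanSpace.single i 1)
          * fderiv ℝ (fun x' => u x' t) (X t) (EuclideanSpace.single i 1))
      + 2 * (∑ i : Fin n, ∑ j : Fin n,
          iteratedFDeriv ℝ 2 (fun x' => u x' t) (X t)
              ![EuclideanSpace.single i 1, EuclideanSpace.single j 1]
            * fderiv ℝ (fun x' => u x' t) (X t) (EuclideanSpace.single i 1)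
            * fderiv ℝ (fun x' => u x' t) (X t) (EuclideanSpace.single j 1)) = 0 := by
  have hF2 : ContDiff ℝ 2 (fderiv ℝ (fderiv ℝ (fun p : EuclideanSpace ℝ (Fin n) × ℝ => u p.1 p.2))) :=
    (hu.fderiv_right (m := 3) (by norm_num)).fderiv_right (m := 2) (by norm_num)
  have hd2 : ∀ b c : EuclideanSpace ℝ (Fin n) × ℝ, Differentiable ℝ
      (fun q => fderiv ℝ (fderiv ℝ (fun p : EuclideanSpace ℝ (Fin n) × ℝ => u p.1 p.2)) q b c) :=
    fun b c q => ((hF2.differentiable (by norm_num) q).clm_apply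
      (differentiableAt_const b)).clm_apply (differentiableAt_const c)
  -- conversion facts
  have hc1 : ∀ (x : EuclideanSpace ℝ (Fin n)) (s : ℝ) (i : Fin n),
      fderiv ℝ (fun x' => u x' s) x (EuclideanSpace.single i 1)
        = fderiv ℝ (fun p : EuclideanSpace ℝ (Fin n) × ℝ => u p.1 p.2) (x, s) (ii n i) :=
    fun x s i => convA1 hu x s (ee n i)
  have hc2 : ∀ (x : EuclideanSpace ℝ (Fin n)) (s : ℝ) (i j : Fin n),
      iteratedFDeriv ℝ 2 (fun x' => u x' s) x
          ![EuclideanSpace.single i 1, EuclideanSpace.single j 1]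
        = fderiv ℝ (fderiv ℝ (fun p : EuclideanSpace ℝ (Fin n) × ℝ => u p.1 p.2)) (x, s)
            (ii n i) (ii n j) :=
    fun x s i j => convI2 hu x s (ee n i) (ee n j)
  have hc4 : ∀ (x : EuclideanSpace ℝ (Fin n)) (s : ℝ) (i j : Fin n),
      iteratedFDeriv ℝ 4 (fun x' => u x' s) x
          ![EuclideanSpace.single i 1, EuclideanSpace.single i 1,
            EuclideanSpace.single j 1, EuclideanSpace.single j 1]
        = fderiv ℝ (fderiv ℝ (fderiv ℝ (fderiv ℝ
            (fun p : EuclideanSpace ℝ (Fin n) × ℝ => u p.1 p.2)))) (x, s)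
            (ii n i) (ii n i) (ii n j) (ii n j) :=
    fun x s i j => convI4 hu x s (ee n i) (ee n i) (ee n j) (ee n j)
  have hc3 : ∀ (x : EuclideanSpace ℝ (Fin n)) (s : ℝ) (i : Fin n),
      fderiv ℝ (fun x' => ∑ j : Fin n, fderiv ℝ (fderiv ℝ
          (fun p : EuclideanSpace ℝ (Fin n) × ℝ => u p.1 p.2)) (x', s) (ii n j) (ii n j)) x
          (EuclideanSpace.single i 1)
        = ∑ j : Fin n, fderiv ℝ (fderiv ℝ (fderiv ℝ
            (fun p : EuclideanSpace ℝ (Fin n) × ℝ => u p.1 p.2))) (x, s)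
            (ii n i) (ii n j) (ii n j) := by
    intro x s i
    have hdsum : DifferentiableAt ℝ (fun q => ∑ j : Fin n, fderiv ℝ (fderiv ℝ
        (fun p : EuclideanSpace ℝ (Fin n) × ℝ => u p.1 p.2)) q (ii n j) (ii n j)) (x, s) :=
      DifferentiableAt.fun_sum fun j _ => hd2 (ii n j) (ii n j) (x, s)
    calc fderiv ℝ (fun x' => ∑ j : Fin n, fderiv ℝ (fderiv ℝ
            (fun p : EuclideanSpace ℝ (Fin n) × ℝ => u p.1 p.2)) (x', s) (ii n j) (ii n j)) x
          (EuclideanSpace.single i 1)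
        = fderiv ℝ (fun q => ∑ j : Fin n, fderiv ℝ (fderiv ℝ
            (fun p : EuclideanSpace ℝ (Fin n) × ℝ => u p.1 p.2)) q (ii n j) (ii n j)) (x, s)
            (ii n i) := sliceX hdsum (ee n i)
      _ = ∑ j : Fin n, fderiv ℝ (fun q => fderiv ℝ (fderiv ℝ
            (fun p : EuclideanSpace ℝ (Fin n) × ℝ => u p.1 p.2)) q (ii n j) (ii n j)) (x, s)
            (ii n i) := by
          rw [fderiv_fun_sum fun j _ => hd2 (ii n j) (ii n j) (x, s)]
          rw [ContinuousLinearMap.sum_apply]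
      _ = ∑ j : Fin n, fderiv ℝ (fderiv ℝ (fderiv ℝ
            (fun p : EuclideanSpace ℝ (Fin n) × ℝ => u p.1 p.2))) (x, s)
            (ii n i) (ii n j) (ii n j) :=
          Finset.sum_congr rfl fun j _ => dapp2 hu (x, s) (ii n i) (ii n j) (ii n j)
  -- hypotheses in product form
  have hstef' : ∀ t ∈ Set.Icc (0:ℝ) T, ∀ i, (deriv X t) i
      = -(fderiv ℝ (fun p : EuclideanSpace ℝ (Fin n) × ℝ => u p.1 p.2) (X t, t) (ii n i)) := by
    intro t ht i
    rw [hstefan t ht]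
    have hg : (gradient (fun x => u x t) (X t)) i
        = fderiv ℝ (fun x => u x t) (X t) (EuclideanSpace.single i 1) := by
      have h1 : (gradient (fun x => u x t) (X t)) i
          = ⟪gradient (fun x => u x t) (X t), EuclideanSpace.single i (1:ℝ)⟫ := by
        rw [EuclideanSpace.inner_single_right]; simp
      rw [h1, gradient, InnerProductSpace.toDual_symm_apply]
    have : (-(gradient (fun x => u x t) (X t))) i = -((gradient (fun x => u x t) (X t)) i) := rfl
    rw [this, hg, hc1 (X t) t i]
  have hheat' : ∀ (x : EuclideanSpace ℝ (Fin n)) (s : ℝ), s ∈ Set.Icc (0:ℝ) T →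
      fderiv ℝ (fun p : EuclideanSpace ℝ (Fin n) × ℝ => u p.1 p.2) (x, s) (tau n)
        = ∑ k, fderiv ℝ (fderiv ℝ (fun p : EuclideanSpace ℝ (Fin n) × ℝ => u p.1 p.2)) (x, s)
            (ii n k) (ii n k) := by
    intro x s hs
    have h1 : deriv (u x) s
        = fderiv ℝ (fun p : EuclideanSpace ℝ (Fin n) × ℝ => u p.1 p.2) (x, s) (tau n) :=
      sliceT (hu.differentiable (by norm_num) (x, s))
    rw [← h1, hheat x s hs]
    exact Finset.sum_congr rfl fun k _ => hc2 x s k k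
  have hcomp' : ∀ t ∈ Set.Icc (0:ℝ) T,
      (∑ j, fderiv ℝ (fderiv ℝ (fun p : EuclideanSpace ℝ (Fin n) × ℝ => u p.1 p.2)) (X t, t)
          (ii n j) (ii n j))
        = ∑ i, (fderiv ℝ (fun p : EuclideanSpace ℝ (Fin n) × ℝ => u p.1 p.2) (X t, t)
            (ii n i)) ^ 2 := by
    intro t ht
    rw [← Finset.sum_congr rfl fun j _ => hc2 (X t) t j j, hcomp1 t ht]
    exact Finset.sum_congr rfl fun i _ => by rw [hc1 (X t) t i]
  have hk := key n T hT (fun p : EuclideanSpace ℝ (Fin n) × ℝ => u p.1 p.2) hu X hX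
    hstef' hheat' hcomp'
  intro t ht
  have hk' := hk t ht
  simp only [hc4, hc2]
  simp only [hc3, hc1]
  exact hk'
end
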